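/- Let V be an 8-dimensional complex vector space, let a, b, p be linear endomorphisms of V, let h be a real number, and assume a∘a = −id, b∘b = −id, a∘b = −b∘a, tr(a∘p) = −4h, and tr(b∘p) = 0. Then for every real number ξ, the trace of the composition (1/(4(ξ−i)²))·[ (5h/2)·b − (5ih/2)·a − (2+iξ)·(a∘b∘p) + i·p ] ∘ [ (1/(1+ξ²)³)·( −4iξ·a + (i − 3iξ²)·b ) ] equals h·(3 + 12iξ + 3ξ²)/((ξ−i)⁴(ξ+i)³). -/

import Mathlib

open Complex

theorem trace_case_c_B1 (V : Type*) [AddCommGroup V] [Module ℂ V] [FiniteDimensional ℂ V]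
    (hdim : Module.finrank ℂ V = 8)
    (a b p : V →ₗ[ℂ] V) (h : ℝ)
    (haa : a ∘ₗ a = -LinearMap.id)
    (hbb : b ∘ₗ b = -LinearMap.id)
    (hab : a ∘ₗ b = -(b ∘ₗ a))
    (hap : LinearMap.trace ℂ V (a ∘ₗ p) = -4 * (h : ℂ))
    (hbp : LinearMap.trace ℂ V (b ∘ₗ p) = 0) :
    ∀ ξ : ℝ, LinearMap.trace ℂ V
      (((1 / (4 * ((ξ : ℂ) - I) ^ 2)) •
          ((5 * (h : ℂ) / 2) • b - (5 * I * (h : ℂ) / 2) • a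
            - (2 + I * (ξ : ℂ)) • (a ∘ₗ b ∘ₗ p) + I • p))
        ∘ₗ ((1 / (1 + (ξ : ℂ) ^ 2) ^ 3) •
            ((-4 * I * (ξ : ℂ)) • a + (I - 3 * I * (ξ : ℂ) ^ 2) • b)))
      = (h : ℂ) * (3 + 12 * I * (ξ : ℂ) + 3 * (ξ : ℂ) ^ 2) /
          (((ξ : ℂ) - I) ^ 4 * ((ξ : ℂ) + I) ^ 3) := by
  intro ξ
  set T := LinearMap.trace ℂ V with hT
  have tid : T LinearMap.id = 8 := by
    simp [hT, LinearMap.trace_id, hdim]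
  have taa : T (a ∘ₗ a) = -8 := by rw [haa]; simp [tid]
  have tbb : T (b ∘ₗ b) = -8 := by rw [hbb]; simp [tid]
  have tcomm : ∀ f g : V →ₗ[ℂ] V, T (f ∘ₗ g) = T (g ∘ₗ f) := fun f g =>
    (LinearMap.trace_comp_comm' f g).symm
  have tab : T (a ∘ₗ b) = 0 := by
    have h1 : T (a ∘ₗ b) = -T (b ∘ₗ a) := by
      rw [hab]; simp [LinearMap.neg_comp]
    have h2 := tcomm a b
    linear_combination h1 / 2 + h2 / 2
  have tba : T (b ∘ₗ a) = 0 := by rw [tcomm]; exact tab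
  have tabpa : T ((a ∘ₗ b ∘ₗ p) ∘ₗ a) = 0 := by
    rw [tcomm, ← LinearMap.comp_assoc, ← LinearMap.comp_assoc, haa]
    simp [hbp]
  have tabpb : T ((a ∘ₗ b ∘ₗ p) ∘ₗ b) = -4 * (h : ℂ) := by
    rw [tcomm, ← LinearMap.comp_assoc, ← LinearMap.comp_assoc,
      show b ∘ₗ a = -(a ∘ₗ b) by rw [hab]; simp,
      show (-(a ∘ₗ b)) ∘ₗ b = -(a ∘ₗ (b ∘ₗ b)) by
        rw [LinearMap.neg_comp, LinearMap.comp_assoc], hbb]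
    simpa using hap
  have tpa : T (p ∘ₗ a) = -4 * (h : ℂ) := by rw [tcomm]; exact hap
  have tpb : T (p ∘ₗ b) = 0 := by rw [tcomm]; exact hbp
  have hmi : (ξ : ℂ) - I ≠ 0 := by
    intro hc
    have := congrArg Complex.im hc
    simp at this
  have hpi : (ξ : ℂ) + I ≠ 0 := by
    intro hc
    have := congrArg Complex.im hc
    simp at this
  have hsq : 1 + (ξ : ℂ) ^ 2 = ((ξ : ℂ) - I) * ((ξ : ℂ) + I) := by
    linear_combination Complex.I_sq
  simp only [LinearMap.comp_smul, LinearMap.smul_comp, LinearMap.add_comp,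
    LinearMap.comp_add, LinearMap.sub_comp, LinearMap.comp_sub, map_add, map_sub,
    map_smul, smul_eq_mul]
  rw [taa, tbb, tab, tba, tabpa, tabpb, tpa, tpb]
  rw [hsq]
  field_simp [hmi, hpi]
  have hB : (4 : ℂ) * ((ξ : ℂ) - I) ^ 2 * 2 ≠ 0 :=
    mul_ne_zero (mul_ne_zero (by norm_num) (pow_ne_zero 2 hmi)) (by norm_num)
  have hden : ((((ξ : ℂ) - I) * ((ξ : ℂ) + I)) ^ 3 *
      (4 * ((ξ : ℂ) - I) ^ 2 * 2 * (4 * ((ξ : ℂ) - I) ^ 2 * 2))) ≠ 0 :=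
    mul_ne_zero (pow_ne_zero 3 (mul_ne_zero hmi hpi)) (mul_ne_zero hB hB)
  linear_combination ((-24:ℂ) * (h:ℂ) * (ξ:ℂ) * (1 + (ξ:ℂ)^2)) * Complex.I_sq
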